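/- Assume C has enough C-injectives. Then S(C) is contravariantly finite in the category H(C) of arrows between objects of C: for every Λ-linear map f : X → Y with X, Y ∈ C, there exist a C-injective object I ∈ C and a map e : X → I such that the map (f,e)ᵗ : X → Y ⊕ I (with components f and e) lies in S(C), and the arrow morphism (𝟙_X, [1,0]) : (f,e)ᵗ → f is a right S(C)-approximation of f: for every h : X′ → Y′ in S(C) and every arrow morphism (φ₁, φ₂) : h → f, there exists ψ : Y′ → Y ⊕ I with ψ ∘ h = (f,e)ᵗ ∘ φ₁ and [1,0] ∘ ψ = φ₂. -/

import Mathlib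

open CategoryTheory CategoryTheory.Limits

universe u

section Defs
variable {Λ : Type u} [Ring Λ]

/-- A short exact sequence `0 → X → Y → Z → 0` of Λ-modules. -/
def ShortExactSeq {X Y Z : ModuleCat.{u} Λ} (f : X ⟶ Y) (g : Y ⟶ Z) : Prop :=
  Function.Injective f ∧ Function.Surjective g ∧ Function.Exact f g

variable (C : Set (ModuleCat.{u} Λ))

/-- An inflation of the exact category `C`: an injective map between objects of `C`
whose cokernel lies in `C`. -/
def IsInflation {X Y : ModuleCat.{u} Λ} (f : X ⟶ Y) : Prop :=
  X ∈ C ∧ Y ∈ C ∧ Function.Injective f ∧ ∃ Z ∈ C, ∃ g : Y ⟶ Z, ShortExactSeq f g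

/-- A deflation of the exact category `C`: a surjective map between objects of `C`
whose kernel lies in `C`. -/
def IsDeflation {X Y : ModuleCat.{u} Λ} (f : X ⟶ Y) : Prop :=
  X ∈ C ∧ Y ∈ C ∧ Function.Surjective f ∧ ∃ Z ∈ C, ∃ g : Z ⟶ X, ShortExactSeq g f

/-- The monomorphism category `S(C)`, as a subcategory of the arrow category. -/
def SMono : Set (Arrow (ModuleCat.{u} Λ)) := {a | IsInflation C a.hom}

/-- The epimorphism category `F(C)`, as a subcategory of the arrow category. -/
def FEpi : Set (Arrow (ModuleCat.{u} Λ)) := {a | IsDeflation C a.hom}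

/-- `I` is a `C`-injective object. -/
def CInjective (I : ModuleCat.{u} Λ) : Prop :=
  I ∈ C ∧ ∀ (U V : ModuleCat.{u} Λ), U ∈ C → V ∈ C →
    ∀ (f : I ⟶ U) (g : U ⟶ V), ShortExactSeq f g → ∃ r : U ⟶ I, f ≫ r = 𝟙 I

/-- `P` is a `C`-projective object. -/
def CProjective (P : ModuleCat.{u} Λ) : Prop :=
  P ∈ C ∧ ∀ (U V : ModuleCat.{u} Λ), U ∈ C → V ∈ C →
    ∀ (f : U ⟶ V) (g : V ⟶ P), ShortExactSeq f g → ∃ s : P ⟶ V, s ≫ g = 𝟙 P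

/-- `C` has enough `C`-injectives. -/
def EnoughCInjectives : Prop :=
  ∀ X ∈ C, ∃ (I X' : ModuleCat.{u} Λ), CInjective C I ∧ X' ∈ C ∧
    ∃ (e : X ⟶ I) (q : I ⟶ X'), ShortExactSeq e q

/-- `C` has enough `C`-projectives. -/
def EnoughCProjectives : Prop :=
  ∀ X ∈ C, ∃ (P X' : ModuleCat.{u} Λ), CProjective C P ∧ X' ∈ C ∧
    ∃ (q : X' ⟶ P) (p : P ⟶ X), ShortExactSeq q p

def ClosedUnderIso : Prop := ∀ (M N : ModuleCat.{u} Λ), (M ≅ N) → M ∈ C → N ∈ C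
def ContainsZero : Prop := ∀ M : ModuleCat.{u} Λ, Subsingleton M → M ∈ C
def ClosedUnderSums : Prop := ∀ M N : ModuleCat.{u} Λ, M ∈ C → N ∈ C → (M ⊞ N) ∈ C
def ClosedUnderExtensions : Prop :=
  ∀ (X Y Z : ModuleCat.{u} Λ) (f : X ⟶ Y) (g : Y ⟶ Z),
    X ∈ C → Z ∈ C → ShortExactSeq f g → Y ∈ C

end Defs

section Approx
variable {A : Type*} [Category A] (D : Set A)

/-- `g : Y ⟶ Z` is a right `D`-approximation of `Z`. -/
def IsRightApprox {Y Z : A} (g : Y ⟶ Z) : Prop :=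
  Y ∈ D ∧ ∀ W ∈ D, ∀ u : W ⟶ Z, ∃ v : W ⟶ Y, v ≫ g = u

/-- `g : Z ⟶ Y` is a left `D`-approximation of `Z`. -/
def IsLeftApprox {Z Y : A} (g : Z ⟶ Y) : Prop :=
  Y ∈ D ∧ ∀ W ∈ D, ∀ u : Z ⟶ W, ∃ v : Y ⟶ W, g ≫ v = u

end Approx

section Finiteness
variable {Λ : Type u} [Ring Λ]

/-- Contravariant finiteness of `C` in `mod Λ` (the finite-dimensional Λ-modules). -/
def ContravariantlyFinite (C : Set (ModuleCat.{u} Λ)) : Prop :=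
  ∀ M : ModuleCat.{u} Λ, Module.Finite Λ M →
    ∃ (Y : ModuleCat.{u} Λ) (g : Y ⟶ M), IsRightApprox C g

/-- Covariant finiteness of `C` in `mod Λ`. -/
def CovariantlyFinite (C : Set (ModuleCat.{u} Λ)) : Prop :=
  ∀ M : ModuleCat.{u} Λ, Module.Finite Λ M →
    ∃ (Y : ModuleCat.{u} Λ) (g : M ⟶ Y), IsLeftApprox C g

end Finiteness

/-- If `C` has enough `C`-injectives, then `S(C)` is contravariantly finite
in `H(C)`: for `f : X ⟶ Y` with `X, Y ∈ C` there are a `C`-injective `I` and `e : X ⟶ I`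
such that `(f,e)ᵗ : X ⟶ Y ⊞ I` lies in `S(C)` and `(𝟙_X, [1,0]) : (f,e)ᵗ → f` is a right
`S(C)`-approximation. -/
theorem smono_contravariantly_finite_in_hmor
    (k : Type u) [Field k] (Λ : Type u) [Ring Λ] [Algebra k Λ] [FiniteDimensional k Λ]
    (C : Set (ModuleCat.{u} Λ))
    (hCfd : ∀ M ∈ C, Module.Finite Λ M)
    (hC0 : ContainsZero C) (hCiso : ClosedUnderIso C)
    (hCsum : ClosedUnderSums C) (hCext : ClosedUnderExtensions C)
    (hCinj : EnoughCInjectives C)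
    (X Y : ModuleCat.{u} Λ) (hX : X ∈ C) (hY : Y ∈ C) (f : X ⟶ Y) :
    ∃ (I : ModuleCat.{u} Λ), CInjective C I ∧ ∃ e : X ⟶ I,
      IsInflation C (biprod.lift f e) ∧
      ∀ (X' Y' : ModuleCat.{u} Λ) (h : X' ⟶ Y'), IsInflation C h →
        ∀ (φ₁ : X' ⟶ X) (φ₂ : Y' ⟶ Y), h ≫ φ₂ = φ₁ ≫ f →
          ∃ ψ : Y' ⟶ (Y ⊞ I : ModuleCat.{u} Λ),
            h ≫ ψ = φ₁ ≫ biprod.lift f e ∧ ψ ≫ biprod.fst = φ₂ := by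
  classical
  have happ : ∀ {A B : ModuleCat.{u} Λ} {g₁ g₂ : A ⟶ B}, g₁ = g₂ → ∀ a : A, g₁ a = g₂ a :=
    fun hg a => by rw [hg]
  obtain ⟨I, X₀, hI, hX₀, e, q, he_inj, hq_surj, heq_exact⟩ := hCinj X hX
  set m : X ⟶ (Y ⊞ I : ModuleCat.{u} Λ) := biprod.lift f e with hm
  -- elementwise facts about the biproduct
  have hm_snd : ∀ x : X, (biprod.snd : (Y ⊞ I : ModuleCat.{u} Λ) ⟶ I) (m x) = e x :=
    fun x => happ (biprod.lift_snd f e) x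
  have hm_fst : ∀ x : X, (biprod.fst : (Y ⊞ I : ModuleCat.{u} Λ) ⟶ Y) (m x) = f x :=
    fun x => happ (biprod.lift_fst f e) x
  have hinl_fst : ∀ y : Y, (biprod.fst : (Y ⊞ I : ModuleCat.{u} Λ) ⟶ Y)
      ((biprod.inl : Y ⟶ (Y ⊞ I : ModuleCat.{u} Λ)) y) = y :=
    fun y => happ (biprod.inl_fst (X := Y) (Y := I)) y
  have hinl_snd : ∀ y : Y, (biprod.snd : (Y ⊞ I : ModuleCat.{u} Λ) ⟶ I)
      ((biprod.inl : Y ⟶ (Y ⊞ I : ModuleCat.{u} Λ)) y) = 0 :=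
    fun y => happ (biprod.inl_snd (X := Y) (Y := I)) y
  have hinr_snd : ∀ i : I, (biprod.snd : (Y ⊞ I : ModuleCat.{u} Λ) ⟶ I)
      ((biprod.inr : I ⟶ (Y ⊞ I : ModuleCat.{u} Λ)) i) = i :=
    fun i => happ (biprod.inr_snd (X := Y) (Y := I)) i
  have htotal : ∀ z : ↥(Y ⊞ I : ModuleCat.{u} Λ),
      (biprod.inl : Y ⟶ _) ((biprod.fst : _ ⟶ Y) z) +
      (biprod.inr : I ⟶ _) ((biprod.snd : _ ⟶ I) z) = z := by
    intro z
    have := happ (biprod.total (X := Y) (Y := I)) z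
    exact this
  have hm_inj : Function.Injective m := by
    intro a b hab
    apply he_inj
    rw [← hm_snd, ← hm_snd, hab]
  -- the cokernel of m
  set K : Submodule Λ ↥(Y ⊞ I : ModuleCat.{u} Λ) := LinearMap.range (m.hom : X →ₗ[Λ] ↥(Y ⊞ I : ModuleCat.{u} Λ)) with hK
  set W : ModuleCat.{u} Λ := ModuleCat.of Λ (↥(Y ⊞ I : ModuleCat.{u} Λ) ⧸ K) with hWdef
  set g : (Y ⊞ I : ModuleCat.{u} Λ) ⟶ W := ModuleCat.ofHom K.mkQ with hg
  have hseq : ShortExactSeq m g := by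
    refine ⟨hm_inj, Submodule.mkQ_surjective K, ?_⟩
    intro z
    show K.mkQ z = 0 ↔ z ∈ Set.range ⇑m
    rw [Submodule.mkQ_apply, Submodule.Quotient.mk_eq_zero]
    exact ⟨fun hz => hz, fun hz => hz⟩
  -- W ∈ C via the extension 0 → Y → W → X₀ → 0
  have hle : K ≤ LinearMap.ker ((q.hom : ↥I →ₗ[Λ] ↥X₀).comp (biprod.snd : (Y ⊞ I : ModuleCat.{u} Λ) ⟶ I).hom) := by
    rintro z ⟨x, rfl⟩
    show q ((biprod.snd : (Y ⊞ I : ModuleCat.{u} Λ) ⟶ I) (m x)) = 0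
    rw [hm_snd]
    exact heq_exact.apply_apply_eq_zero x
  set α : Y ⟶ W := (biprod.inl : Y ⟶ (Y ⊞ I : ModuleCat.{u} Λ)) ≫ g with hα
  set β : W ⟶ X₀ := ModuleCat.ofHom (K.liftQ ((q.hom : ↥I →ₗ[Λ] ↥X₀).comp (biprod.snd : (Y ⊞ I : ModuleCat.{u} Λ) ⟶ I).hom) hle) with hβ
  have hWC : W ∈ C := by
    refine hCext Y W X₀ α β hY hX₀ ⟨?_, ?_, ?_⟩
    · -- α injective
      intro y₁ y₂ hy
      have hsub : (biprod.inl : Y ⟶ (Y ⊞ I : ModuleCat.{u} Λ)) y₁ -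
          (biprod.inl : Y ⟶ (Y ⊞ I : ModuleCat.{u} Λ)) y₂ ∈ K :=
        (Submodule.Quotient.eq K).mp hy
      obtain ⟨x, hx⟩ := hsub
      have hex : e x = 0 := by
        have := congrArg (biprod.snd : (Y ⊞ I : ModuleCat.{u} Λ) ⟶ I) hx
        rw [hm_snd, map_sub, hinl_snd, hinl_snd, sub_self] at this
        exact this
      have hx0 : x = 0 := he_inj (by rw [hex, map_zero])
      have hinleq : (biprod.inl : Y ⟶ (Y ⊞ I : ModuleCat.{u} Λ)) y₁ =
          (biprod.inl : Y ⟶ (Y ⊞ I : ModuleCat.{u} Λ)) y₂ := by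
        rw [← sub_eq_zero, ← hx, hx0, map_zero]
      rw [← hinl_fst y₁, ← hinl_fst y₂, hinleq]
    · -- β surjective
      intro x₀
      obtain ⟨i, rfl⟩ := hq_surj x₀
      refine ⟨g ((biprod.inr : I ⟶ (Y ⊞ I : ModuleCat.{u} Λ)) i), ?_⟩
      show q ((biprod.snd : (Y ⊞ I : ModuleCat.{u} Λ) ⟶ I)
        ((biprod.inr : I ⟶ (Y ⊞ I : ModuleCat.{u} Λ)) i)) = q i
      rw [hinr_snd]
    · -- exactness at W
      intro w
      constructor
      · intro hw
        obtain ⟨z, rfl⟩ := Submodule.mkQ_surjective K w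
        have hqz : q ((biprod.snd : (Y ⊞ I : ModuleCat.{u} Λ) ⟶ I) z) = 0 := hw
        obtain ⟨x, hx⟩ := (heq_exact _).mp hqz
        refine ⟨(biprod.fst : (Y ⊞ I : ModuleCat.{u} Λ) ⟶ Y) (z - m x), ?_⟩
        show K.mkQ ((biprod.inl : Y ⟶ (Y ⊞ I : ModuleCat.{u} Λ))
          ((biprod.fst : (Y ⊞ I : ModuleCat.{u} Λ) ⟶ Y) (z - m x))) = K.mkQ z
        have hsnd0 : (biprod.snd : (Y ⊞ I : ModuleCat.{u} Λ) ⟶ I) (z - m x) = 0 := by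
          rw [map_sub, hm_snd, hx, sub_self]
        have hdecomp := htotal (z - m x)
        rw [hsnd0, map_zero, add_zero] at hdecomp
        rw [hdecomp]
        rw [Submodule.mkQ_apply, Submodule.mkQ_apply, Submodule.Quotient.eq]
        exact ⟨-x, by rw [map_neg]; abel⟩
      · rintro ⟨y, rfl⟩
        show q ((biprod.snd : (Y ⊞ I : ModuleCat.{u} Λ) ⟶ I)
          ((biprod.inl : Y ⟶ (Y ⊞ I : ModuleCat.{u} Λ)) y)) = 0
        rw [hinl_snd, map_zero]
  refine ⟨I, hI, e, ⟨hX, hCsum Y I hY hI.1, hm_inj, W, hWC, g, hseq⟩, ?_⟩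
  -- the approximation property
  intro X₁ Y₁ h hinfl φ₁ φ₂ hcomm
  obtain ⟨hX₁, hY₁, h_inj, Z, hZ, p, hp_inj, hp_surj, hp_exact⟩ := hinfl
  -- pushout of h along φ₁ ≫ e
  set lφ : ↥X₁ →ₗ[Λ] ↥I := (φ₁ ≫ e : X₁ ⟶ I).hom with hlφ
  set S : Submodule Λ (↥Y₁ × ↥I) :=
    LinearMap.range (LinearMap.prod (h.hom : ↥X₁ →ₗ[Λ] ↥Y₁) (-lφ)) with hS
  set U : ModuleCat.{u} Λ := ModuleCat.of Λ ((↥Y₁ × ↥I) ⧸ S) with hU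
  set inI : I ⟶ U := ModuleCat.ofHom (S.mkQ.comp (LinearMap.inr Λ ↥Y₁ ↥I)) with hinI
  set inY : Y₁ ⟶ U := ModuleCat.ofHom (S.mkQ.comp (LinearMap.inl Λ ↥Y₁ ↥I)) with hinY
  have hle₂ : S ≤ LinearMap.ker ((p.hom : ↥Y₁ →ₗ[Λ] ↥Z).comp (LinearMap.fst Λ ↥Y₁ ↥I)) := by
    rintro z ⟨x, rfl⟩
    show p (h x) = 0
    exact hp_exact.apply_apply_eq_zero x
  set t : U ⟶ Z := ModuleCat.ofHom (S.liftQ ((p.hom : ↥Y₁ →ₗ[Λ] ↥Z).comp (LinearMap.fst Λ ↥Y₁ ↥I)) hle₂) with ht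
  have hseq₂ : ShortExactSeq inI t := by
    refine ⟨?_, ?_, ?_⟩
    · -- inI injective
      have h0 : ∀ i : ↥I, inI i = 0 → i = 0 := by
        intro i hi
        have : ((0 : ↥Y₁), i) ∈ S := (Submodule.Quotient.mk_eq_zero S).mp hi
        obtain ⟨x, hx⟩ := this
        have hx1 : h x = 0 := congrArg Prod.fst hx
        have hx0 : x = 0 := h_inj (by rw [hx1, map_zero])
        have hx2 : -lφ x = i := congrArg Prod.snd hx
        rw [hx0, map_zero, neg_zero] at hx2
        exact hx2.symm
      intro a b hab
      have := h0 (a - b) (by rw [map_sub, hab, sub_self])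
      exact sub_eq_zero.mp this
    · -- t surjective
      intro z
      obtain ⟨y, rfl⟩ := hp_surj z
      exact ⟨S.mkQ (y, 0), rfl⟩
    · -- exact
      intro u
      constructor
      · intro hu
        obtain ⟨yi, rfl⟩ := Submodule.mkQ_surjective S u
        obtain ⟨y, i⟩ := yi
        have hpy : p y = 0 := hu
        obtain ⟨x, hx⟩ := (hp_exact y).mp hpy
        refine ⟨i + lφ x, ?_⟩
        show S.mkQ ((0 : ↥Y₁), i + lφ x) = S.mkQ (y, i)
        rw [Submodule.mkQ_apply, Submodule.mkQ_apply, Submodule.Quotient.eq]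
        refine ⟨-x, ?_⟩
        show (h (-x), -lφ (-x)) = ((0:↥Y₁), i + lφ x) - (y, i)
        rw [map_neg, map_neg, neg_neg, hx]
        ext
        · show -y = 0 - y; abel
        · show lφ x = (i + lφ x) - i; abel
      · rintro ⟨i, rfl⟩
        show p ((0 : ↥Y₁)) = 0  -- t (inI i) = p (fst (0, i)) = p 0
        rw [map_zero]
  have hUC : U ∈ C := hCext I U Z inI t hI.1 hZ hseq₂
  obtain ⟨r, hr⟩ := hI.2 U Z hUC hZ inI t hseq₂
  refine ⟨biprod.lift φ₂ ((inY ≫ r : Y₁ ⟶ I)), ?_, biprod.lift_fst _ _⟩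
  apply biprod.hom_ext
  · rw [Category.assoc, Category.assoc, biprod.lift_fst, biprod.lift_fst]
    exact hcomm
  · rw [Category.assoc, Category.assoc, biprod.lift_snd, biprod.lift_snd]
    -- h ≫ inY ≫ r = φ₁ ≫ e
    apply ModuleCat.hom_ext
    apply LinearMap.ext
    intro x
    show r (inY (h x)) = e (φ₁ x)
    have key : inY (h x) = inI (lφ x) := by
      show S.mkQ (h x, (0:↥I)) = S.mkQ ((0:↥Y₁), lφ x)
      rw [Submodule.mkQ_apply, Submodule.mkQ_apply, Submodule.Quotient.eq]
      refine ⟨x, ?_⟩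
      show ((h x : ↥Y₁), -lφ x) = ((h x : ↥Y₁), (0:↥I)) - ((0:↥Y₁), lφ x)
      rw [Prod.mk_sub_mk, sub_zero, zero_sub]
    rw [key]
    exact happ hr (lφ x)
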